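/- Let f : ℝ^d → ℂ be measurable with |f(x)| ≤ 1 for all x, let ℓ ≥ 1, and define f^(ℓ)(x) = f(x) e^{−‖x‖²/(2ℓ²)}. Then the Fourier transform f̂^(ℓ) is ℓ^{d+1}-Lipschitz on ℝ^d: |f̂^(ℓ)(y₁) − f̂^(ℓ)(y₂)| ≤ ℓ^{d+1} ‖y₁ − y₂‖. -/

import Mathlib

open MeasureTheory Complex Real RealInnerProductSpace

lemma aux_exp_I_sub_one (t : ℝ) : ‖Complex.exp ((t : ℂ) * Complex.I) - 1‖ ≤ |t| := by
  have h : Complex.exp ((t:ℂ) * Complex.I) - 1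
      = ((Real.cos t - 1 : ℝ) : ℂ) + ((Real.sin t : ℝ) : ℂ) * Complex.I := by
    rw [Complex.exp_mul_I]; push_cast; ring
  rw [h, Complex.norm_add_mul_I]
  have hb : (Real.cos t - 1) ^ 2 + Real.sin t ^ 2 ≤ t ^ 2 := by
    nlinarith [Real.sin_sq_add_cos_sq t, Real.one_sub_sq_div_two_le_cos (x := t)]
  calc Real.sqrt ((Real.cos t - 1) ^ 2 + Real.sin t ^ 2) ≤ Real.sqrt (t ^ 2) :=
        Real.sqrt_le_sqrt hb
    _ = |t| := Real.sqrt_sq_eq_abs t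

lemma aux_cexp_diff (a b : ℝ) :
    ‖Complex.exp (-(Complex.I * a)) - Complex.exp (-(Complex.I * b))‖ ≤ |a - b| := by
  have h : Complex.exp (-(Complex.I * a)) - Complex.exp (-(Complex.I * b))
      = Complex.exp (-(Complex.I * b)) * (Complex.exp (((b - a : ℝ) : ℂ) * Complex.I) - 1) := by
    rw [mul_sub, ← Complex.exp_add, mul_one]
    congr 2
    push_cast; ring
  rw [h, norm_mul]
  have h2 : ‖Complex.exp (-(Complex.I * (b : ℂ)))‖ = 1 := by
    simp [Complex.norm_exp]
  rw [h2, one_mul]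
  calc ‖Complex.exp (((b - a : ℝ) : ℂ) * Complex.I) - 1‖ ≤ |b - a| := aux_exp_I_sub_one _
    _ = |a - b| := abs_sub_comm _ _

lemma aux_integral_abs_mul_exp {b : ℝ} (hb : 0 < b) :
    ∫ x : ℝ, |x| * Real.exp (-b * x ^ 2) = b⁻¹ := by
  have h0 := integral_comp_abs (f := fun t => t * Real.exp (-b * t ^ 2))
  simp only [_root_.sq_abs] at h0
  rw [h0]
  have h2 : (∫ x in Set.Ioi (0:ℝ), x * Real.exp (-b * x ^ 2))
      = ∫ x in Set.Ioi (0:ℝ), x ^ (1:ℝ) * Real.exp (-b * x ^ (2:ℝ)) := by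
    refine setIntegral_congr_fun measurableSet_Ioi fun x hx => ?_
    rw [Real.rpow_one]
    norm_num [Real.rpow_natCast]
  rw [h2, integral_rpow_mul_exp_neg_mul_rpow zero_lt_two (by norm_num) hb]
  norm_num [Real.Gamma_one, Real.rpow_neg_one]
  ring
lemma aux_key (n : ℕ) {b : ℝ} (hb : 0 < b) :
    (∫ x : EuclideanSpace ℝ (Fin (n + 1)), |x 0| * Real.exp (-b * ‖x‖ ^ 2)
        = b⁻¹ * (Real.sqrt (π / b)) ^ n)
    ∧ Integrable (fun x : EuclideanSpace ℝ (Fin (n + 1)) => |x 0| * Real.exp (-b * ‖x‖ ^ 2)) := by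
  set h : Fin (n + 1) → ℝ → ℝ :=
    Fin.cons (fun t => |t| * Real.exp (-b * t ^ 2)) (fun _ t => Real.exp (-b * t ^ 2)) with hh
  have hint : ∀ i, Integrable (h i) := by
    intro i
    refine Fin.cases ?_ ?_ i
    · have := (integrable_mul_exp_neg_mul_sq hb).abs
      refine this.congr ?_
      filter_upwards with x
      simp [hh, abs_mul, abs_of_pos (Real.exp_pos _)]
    · intro j
      simpa [hh] using integrable_exp_neg_mul_sq hb
  have hprod : ∀ x : Fin (n + 1) → ℝ,
      (∏ i, h i (x i)) = |x 0| * Real.exp (-b * ∑ i, x i ^ 2) := by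
    intro x
    rw [Fin.prod_univ_succ, Fin.sum_univ_succ]
    simp only [hh, Fin.cons_zero, Fin.cons_succ]
    rw [mul_add, Real.exp_add]
    have hpe : (∏ i : Fin n, Real.exp (-b * x i.succ ^ 2))
        = Real.exp (-b * ∑ i : Fin n, x i.succ ^ 2) := by
      rw [← Real.exp_sum]
      congr 1
      rw [Finset.mul_sum]
    rw [hpe]; ring
  -- transfer to EuclideanSpace
  have hmp := (EuclideanSpace.volume_preserving_symm_measurableEquiv_toLp (Fin (n + 1))).symm
  have hemb := (MeasurableEquiv.toLp 2 (Fin (n + 1) → ℝ)).measurableEmbedding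
  set G : EuclideanSpace ℝ (Fin (n + 1)) → ℝ :=
    fun x => |x 0| * Real.exp (-b * ‖x‖ ^ 2) with hG
  have hcomp : ∀ v : Fin (n + 1) → ℝ,
      G ((MeasurableEquiv.toLp 2 (Fin (n + 1) → ℝ)) v) = ∏ i, h i (v i) := by
    intro v
    rw [hprod]
    simp only [hG, MeasurableEquiv.toLp_apply, EuclideanSpace.norm_eq, PiLp.toLp_apply]
    rw [Real.sq_sqrt (Finset.sum_nonneg fun i _ => sq_nonneg _)]
    simp [Real.norm_eq_abs, sq_abs]
  constructor
  · rw [← hmp.integral_comp hemb G]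
    calc (∫ v : Fin (n + 1) → ℝ, G ((MeasurableEquiv.toLp 2 (Fin (n + 1) → ℝ)) v))
        = ∫ v : Fin (n + 1) → ℝ, ∏ i, h i (v i) := by
          congr 1; ext v; exact hcomp v
      _ = ∏ i, ∫ t : ℝ, h i t := integral_fintype_prod_eq_prod h
      _ = b⁻¹ * (Real.sqrt (π / b)) ^ n := by
          rw [Fin.prod_univ_succ]
          have h0 : (∫ t : ℝ, h 0 t) = b⁻¹ := by
            simpa [hh] using aux_integral_abs_mul_exp hb
          have hs : ∀ i : Fin n, (∫ t : ℝ, h i.succ t) = Real.sqrt (π / b) := by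
            intro i
            simp only [hh, Fin.cons_succ]
            rw [integral_gaussian]
          rw [h0]
          simp only [hs, Finset.prod_const, Finset.card_univ, Fintype.card_fin]
  · rw [← hmp.integrable_comp_emb hemb]
    have : (G ∘ (MeasurableEquiv.toLp 2 (Fin (n + 1) → ℝ)))
        = fun v : Fin (n + 1) → ℝ => ∏ i, h i (v i) := by
      ext v; exact hcomp v
    rw [MeasurableEquiv.symm_symm, this]
    exact Integrable.fintype_prod (f := h) hint

/-- the Fourier transform of `f^(ℓ)(x) = f(x) e^{-‖x‖²/(2ℓ²)}`, for `|f| ≤ 1`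
and `ℓ ≥ 1`, is `ℓ^{d+1}`-Lipschitz on `ℝ^d` (convention
`f̂^(ℓ)(y) = (2π)^{-d/2} ∫ e^{-i⟪y,x⟫} f^(ℓ)(x) dx`). -/
theorem fourier_lipschitz_highdim (d : ℕ) (f : EuclideanSpace ℝ (Fin d) → ℂ)
    (hfm : Measurable f) (hf : ∀ x, ‖f x‖ ≤ 1) (ℓ : ℝ) (hℓ : 1 ≤ ℓ)
    (y₁ y₂ : EuclideanSpace ℝ (Fin d)) :
    ‖((((Real.sqrt (2 * Real.pi)) ^ d)⁻¹ : ℂ) *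
        ∫ x : EuclideanSpace ℝ (Fin d),
          Complex.exp (-(Complex.I * (⟪y₁, x⟫ : ℝ))) * f x *
            ((Real.exp (-‖x‖ ^ 2 / (2 * ℓ ^ 2)) : ℝ) : ℂ)) -
      ((((Real.sqrt (2 * Real.pi)) ^ d)⁻¹ : ℂ) *
        ∫ x : EuclideanSpace ℝ (Fin d),
          Complex.exp (-(Complex.I * (⟪y₂, x⟫ : ℝ))) * f x *
            ((Real.exp (-‖x‖ ^ 2 / (2 * ℓ ^ 2)) : ℝ) : ℂ))‖ ≤
      ℓ ^ (d + 1) * ‖y₁ - y₂‖ := by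
  rcases eq_or_ne y₁ y₂ with rfl | hy
  · have hr : 0 ≤ ℓ ^ (d + 1) * ‖y₁ - y₁‖ := by positivity
    simpa using hr
  obtain ⟨n, rfl⟩ : ∃ n, d = n + 1 := by
    rcases d with _ | n
    · exact absurd (Subsingleton.elim _ _ : y₁ = y₂) hy
    · exact ⟨n, rfl⟩
  have hℓ0 : 0 < ℓ := lt_of_lt_of_le one_pos hℓ
  set b : ℝ := (2 * ℓ ^ 2)⁻¹ with hbdef
  have hb : 0 < b := by positivity
  have hgb : ∀ x : EuclideanSpace ℝ (Fin (n + 1)),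
      Real.exp (-‖x‖ ^ 2 / (2 * ℓ ^ 2)) = Real.exp (-b * ‖x‖ ^ 2) := by
    intro x; congr 1; rw [hbdef]; ring
  -- integrability of the Gaussian weight
  have hgInt : Integrable (fun x : EuclideanSpace ℝ (Fin (n + 1)) =>
      Real.exp (-b * ‖x‖ ^ 2)) := by
    have h1 := (GaussianFourier.integrable_cexp_neg_mul_sq_norm_add
      (V := EuclideanSpace ℝ (Fin (n + 1))) (b := (b : ℂ)) (by simpa using hb) 0 0).norm
    refine h1.congr ?_
    filter_upwards with x
    simp [Complex.norm_exp, ← Complex.ofReal_pow]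
  -- integrability of the full integrand
  have hFm : ∀ y : EuclideanSpace ℝ (Fin (n + 1)), Measurable fun x =>
      Complex.exp (-(Complex.I * (⟪y, x⟫ : ℝ))) * f x *
        ((Real.exp (-‖x‖ ^ 2 / (2 * ℓ ^ 2)) : ℝ) : ℂ) := by
    intro y
    have h1 : Continuous fun x : EuclideanSpace ℝ (Fin (n + 1)) => (⟪y, x⟫ : ℝ) :=
      continuous_const.inner continuous_id
    have h2 : Measurable fun x : EuclideanSpace ℝ (Fin (n + 1)) =>
        Complex.exp (-(Complex.I * (⟪y, x⟫ : ℝ))) :=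
      (Complex.continuous_exp.comp
        ((continuous_const.mul (Complex.continuous_ofReal.comp h1)).neg)).measurable
    have h3 : Continuous fun x : EuclideanSpace ℝ (Fin (n + 1)) =>
        ((Real.exp (-‖x‖ ^ 2 / (2 * ℓ ^ 2)) : ℝ) : ℂ) := by fun_prop
    exact (h2.mul hfm).mul h3.measurable
  have hFint : ∀ y : EuclideanSpace ℝ (Fin (n + 1)), Integrable fun x =>
      Complex.exp (-(Complex.I * (⟪y, x⟫ : ℝ))) * f x *
        ((Real.exp (-‖x‖ ^ 2 / (2 * ℓ ^ 2)) : ℝ) : ℂ) := by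
    intro y
    refine hgInt.mono' (hFm y).aestronglyMeasurable ?_
    filter_upwards with x
    rw [norm_mul, norm_mul]
    have e1 : ‖Complex.exp (-(Complex.I * (⟪y, x⟫ : ℝ)))‖ = 1 := by
      simp [Complex.norm_exp]
    have e2 : ‖((Real.exp (-‖x‖ ^ 2 / (2 * ℓ ^ 2)) : ℝ) : ℂ)‖ = Real.exp (-b * ‖x‖ ^ 2) := by
      rw [Complex.norm_real, Real.norm_eq_abs, _root_.abs_of_pos (Real.exp_pos _), hgb x]
    rw [e1, one_mul, e2]
    calc ‖f x‖ * Real.exp (-b * ‖x‖ ^ 2) ≤ 1 * Real.exp (-b * ‖x‖ ^ 2) :=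
          mul_le_mul_of_nonneg_right (hf x) (Real.exp_pos _).le
      _ = Real.exp (-b * ‖x‖ ^ 2) := one_mul _
  -- orthonormal basis with first vector in direction y₁ - y₂
  have hu' : y₁ - y₂ ≠ 0 := sub_ne_zero.mpr hy
  have hc : 0 < ‖y₁ - y₂‖ := norm_pos_iff.mpr hu'
  set u : EuclideanSpace ℝ (Fin (n + 1)) := ‖y₁ - y₂‖⁻¹ • (y₁ - y₂) with hudef
  have hun : ‖u‖ = 1 := norm_smul_inv_norm hu'
  have hcard : Module.finrank ℝ (EuclideanSpace ℝ (Fin (n + 1)))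
      = Fintype.card (Fin (n + 1)) := by simp
  have horth : Orthonormal ℝ (Set.restrict {(0 : Fin (n + 1))} fun _ => u) := by
    constructor
    · intro i; exact hun
    · intro i j hij; exact absurd (Subsingleton.elim i j) hij
  obtain ⟨B, hB⟩ := Orthonormal.exists_orthonormalBasis_extension_of_card_eq hcard horth
  have hB0 : B 0 = u := hB 0 rfl
  have hTinner : ∀ x : EuclideanSpace ℝ (Fin (n + 1)), (⟪u, x⟫ : ℝ) = B.repr x 0 := by
    intro x
    rw [OrthonormalBasis.repr_apply_apply, hB0]
  -- the key Gaussian integral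
  have hKey := aux_key n hb
  have hmpT : MeasurePreserving B.repr := B.measurePreserving_repr
  have hembT : MeasurableEmbedding B.repr := B.repr.toHomeomorph.measurableEmbedding
  have hKint : Integrable (fun x : EuclideanSpace ℝ (Fin (n + 1)) =>
      |B.repr x 0| * Real.exp (-b * ‖x‖ ^ 2)) := by
    have h1 := (hmpT.integrable_comp_emb hembT).mpr hKey.2
    refine h1.congr ?_
    filter_upwards with x
    simp [Function.comp, B.repr.norm_map]
  have hKval : (∫ x : EuclideanSpace ℝ (Fin (n + 1)),
      |B.repr x 0| * Real.exp (-b * ‖x‖ ^ 2)) = b⁻¹ * Real.sqrt (π / b) ^ n := by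
    rw [← hKey.1,
      ← hmpT.integral_comp hembT (fun z => |z 0| * Real.exp (-b * ‖z‖ ^ 2))]
    congr 1; ext x
    rw [B.repr.norm_map]
  -- majorant and pointwise bound
  set M : EuclideanSpace ℝ (Fin (n + 1)) → ℝ :=
    fun x => ‖y₁ - y₂‖ * (|B.repr x 0| * Real.exp (-b * ‖x‖ ^ 2)) with hMdef
  have hMint : Integrable M := hKint.const_mul _
  have hMbound : ∀ x : EuclideanSpace ℝ (Fin (n + 1)),
      ‖Complex.exp (-(Complex.I * (⟪y₁, x⟫ : ℝ))) * f x *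
          ((Real.exp (-‖x‖ ^ 2 / (2 * ℓ ^ 2)) : ℝ) : ℂ) -
        Complex.exp (-(Complex.I * (⟪y₂, x⟫ : ℝ))) * f x *
          ((Real.exp (-‖x‖ ^ 2 / (2 * ℓ ^ 2)) : ℝ) : ℂ)‖ ≤ M x := by
    intro x
    have hsplit : Complex.exp (-(Complex.I * (⟪y₁, x⟫ : ℝ))) * f x *
          ((Real.exp (-‖x‖ ^ 2 / (2 * ℓ ^ 2)) : ℝ) : ℂ) -
        Complex.exp (-(Complex.I * (⟪y₂, x⟫ : ℝ))) * f x *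
          ((Real.exp (-‖x‖ ^ 2 / (2 * ℓ ^ 2)) : ℝ) : ℂ)
        = (Complex.exp (-(Complex.I * (⟪y₁, x⟫ : ℝ))) -
            Complex.exp (-(Complex.I * (⟪y₂, x⟫ : ℝ)))) *
          (f x * ((Real.exp (-‖x‖ ^ 2 / (2 * ℓ ^ 2)) : ℝ) : ℂ)) := by ring
    rw [hsplit, norm_mul, norm_mul]
    have h1 := aux_cexp_diff (⟪y₁, x⟫ : ℝ) (⟪y₂, x⟫ : ℝ)
    have h4 : |(⟪y₁, x⟫ : ℝ) - (⟪y₂, x⟫ : ℝ)| = ‖y₁ - y₂‖ * |B.repr x 0| := by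
      rw [← inner_sub_left, ← hTinner x]
      have h5 : (⟪y₁ - y₂, x⟫ : ℝ) = ‖y₁ - y₂‖ * (⟪u, x⟫ : ℝ) := by
        rw [hudef, real_inner_smul_left]
        field_simp
      rw [h5, abs_mul, abs_of_pos hc]
    have e2 : ‖((Real.exp (-‖x‖ ^ 2 / (2 * ℓ ^ 2)) : ℝ) : ℂ)‖ = Real.exp (-b * ‖x‖ ^ 2) := by
      rw [Complex.norm_real, Real.norm_eq_abs, _root_.abs_of_pos (Real.exp_pos _), hgb x]
    rw [e2, hMdef]
    calc ‖Complex.exp (-(Complex.I * (⟪y₁, x⟫ : ℝ))) -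
            Complex.exp (-(Complex.I * (⟪y₂, x⟫ : ℝ)))‖ *
          (‖f x‖ * Real.exp (-b * ‖x‖ ^ 2))
        ≤ |(⟪y₁, x⟫ : ℝ) - (⟪y₂, x⟫ : ℝ)| * (1 * Real.exp (-b * ‖x‖ ^ 2)) := by
          apply mul_le_mul h1
          · exact mul_le_mul_of_nonneg_right (hf x) (Real.exp_pos _).le
          · positivity
          · positivity
      _ = ‖y₁ - y₂‖ * (|B.repr x 0| * Real.exp (-b * ‖x‖ ^ 2)) := by
          rw [h4]; ring
  -- put things together
  rw [← mul_sub, ← integral_sub (hFint y₁) (hFint y₂), norm_mul]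
  have hnc : ‖((((Real.sqrt (2 * Real.pi)) ^ (n + 1))⁻¹ : ℂ))‖
      = ((Real.sqrt (2 * Real.pi)) ^ (n + 1))⁻¹ := by
    rw [norm_inv, norm_pow, Complex.norm_real]
    rw [Real.norm_eq_abs, _root_.abs_of_nonneg (Real.sqrt_nonneg _)]
  rw [hnc]
  have hstep := norm_integral_le_of_norm_le hMint (ae_of_all _ hMbound)
  calc ((Real.sqrt (2 * Real.pi)) ^ (n + 1))⁻¹ * ‖∫ x, _‖
      ≤ ((Real.sqrt (2 * Real.pi)) ^ (n + 1))⁻¹ * ∫ x, M x :=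
        mul_le_mul_of_nonneg_left hstep (by positivity)
    _ = ((Real.sqrt (2 * Real.pi)) ^ (n + 1))⁻¹ *
          (‖y₁ - y₂‖ * (b⁻¹ * Real.sqrt (π / b) ^ n)) := by
        rw [hMdef]
        simp only []
        rw [MeasureTheory.integral_const_mul, hKval]
    _ ≤ ℓ ^ (n + 1 + 1) * ‖y₁ - y₂‖ := by
        have hbinv : b⁻¹ = 2 * ℓ ^ 2 := by rw [hbdef, inv_inv]
        have hpib : π / b = (2 * π) * ℓ ^ 2 := by rw [hbdef]; field_simp
        have hsq : Real.sqrt (π / b) = Real.sqrt (2 * π) * ℓ := by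
          rw [hpib, Real.sqrt_mul (by positivity), Real.sqrt_sq hℓ0.le]
        set s : ℝ := Real.sqrt (2 * π) with hsdef
        have hspos : 0 < s := Real.sqrt_pos.mpr (by positivity)
        have hs2 : 2 ≤ s := by
          nlinarith [Real.sq_sqrt (show (0:ℝ) ≤ 2 * π by positivity), Real.pi_gt_three,
            hspos, hsdef]
        rw [hbinv, hsq]
        have expand : (s ^ (n + 1))⁻¹ * (‖y₁ - y₂‖ * (2 * ℓ ^ 2 * (s * ℓ) ^ n))
            = (‖y₁ - y₂‖ * ℓ ^ (n + 1 + 1)) * (2 * s ^ n * (s ^ (n + 1))⁻¹) := by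
          rw [mul_pow]; ring
        have hfrac : 2 * s ^ n * (s ^ (n + 1))⁻¹ ≤ 1 := by
          rw [← div_eq_mul_inv, div_le_one (by positivity), pow_succ]
          nlinarith [pow_pos hspos n]
        rw [expand]
        calc (‖y₁ - y₂‖ * ℓ ^ (n + 1 + 1)) * (2 * s ^ n * (s ^ (n + 1))⁻¹)
            ≤ (‖y₁ - y₂‖ * ℓ ^ (n + 1 + 1)) * 1 :=
              mul_le_mul_of_nonneg_left hfrac (by positivity)
          _ = ℓ ^ (n + 1 + 1) * ‖y₁ - y₂‖ := by ring
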